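/- For every natural number n and every complex number z, ∫_ℝ H_n(t) · e^{2tz − z² − t²} dt = 2^n · √π · z^n. Equivalently, the Bargmann transform 𝔅f(z) = (2^{1/4}/π^{3/2}) ∫_ℝ f(t/√(2π)) e^{2tz − z² − t²/2} dt of the scaled Hermite function h_n(x) = H_n(√(2π)·x) e^{−πx²} equals (2^{n+1/4}/π) z^n. -/

import Mathlib

open MeasureTheory Real
open scoped Real

/-- The `n`-th physicists' Hermite polynomial, via the Rodrigues formula
`H_n(x) = (-1)^n e^{x²} (d^n/dx^n) e^{-x²}`. -/
noncomputable def physHermite (n : ℕ) (x : ℝ) : ℝ :=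
  (-1) ^ n * Real.exp (x ^ 2) * iteratedDeriv n (fun t : ℝ => Real.exp (-t ^ 2)) x

/-- The scaled Hermite function `h_n(x) = H_n(√(2π)x) e^{-πx²}`, viewed as a
complex-valued function. -/
noncomputable def scaledHermite (n : ℕ) (x : ℝ) : ℂ :=
  (physHermite n (Real.sqrt (2 * π) * x) : ℂ) * Complex.exp (-(π * x ^ 2 : ℝ))

/-- Auxiliary polynomial family: the physicists' Hermite polynomials. -/
noncomputable def pH : ℕ → Polynomial ℝ
  | 0 => 1
  | n + 1 => 2 * (Polynomial.X * pH n) - Polynomial.derivative (pH n)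

lemma gauss_hasDerivAt (t : ℝ) :
    HasDerivAt (fun t : ℝ => Real.exp (-t ^ 2)) (-2 * t * Real.exp (-t ^ 2)) t := by
  have h : HasDerivAt (fun t : ℝ => -t ^ 2) (-(2 * t)) t := by
    simpa using (hasDerivAt_pow 2 t).fun_neg
  convert h.exp using 1
  ring

lemma iteratedDeriv_gauss (n : ℕ) :
    ∀ t : ℝ, iteratedDeriv n (fun s : ℝ => Real.exp (-s ^ 2)) t
      = (-1) ^ n * (pH n).eval t * Real.exp (-t ^ 2) := by
  induction n with
  | zero => intro t; simp [pH]
  | succ n ih =>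
    intro t
    rw [iteratedDeriv_succ]
    have h1 : iteratedDeriv n (fun s : ℝ => Real.exp (-s ^ 2))
        = fun s => (-1) ^ n * (pH n).eval s * Real.exp (-s ^ 2) := funext ih
    rw [h1]
    have hp : HasDerivAt (fun s : ℝ => (pH n).eval s)
        ((Polynomial.derivative (pH n)).eval t) t := (pH n).hasDerivAt t
    have h2 := (hp.const_mul ((-1 : ℝ) ^ n)).fun_mul (gauss_hasDerivAt t)
    rw [h2.deriv]
    have hev : (pH (n + 1)).eval t
        = 2 * t * (pH n).eval t - (Polynomial.derivative (pH n)).eval t := by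
      simp [pH]; ring
    rw [hev]
    ring

lemma physHermite_eq (n : ℕ) (t : ℝ) : physHermite n t = (pH n).eval t := by
  have h1 : ((-1 : ℝ)) ^ n * ((-1 : ℝ)) ^ n = 1 := by
    rw [← pow_add, ← two_mul, pow_mul]
    norm_num
  have h2 : Real.exp (t ^ 2) * Real.exp (-t ^ 2) = 1 := by
    rw [← Real.exp_add]; simp
  unfold physHermite
  rw [iteratedDeriv_gauss]
  linear_combination (Real.exp (t ^ 2) * Real.exp (-t ^ 2) * (pH n).eval t) * h1
    + ((pH n).eval t) * h2

lemma integrable_pow_mul_cexp (k : ℕ) {b : ℂ} (hb : b.re < 0) (c d : ℂ) :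
    Integrable fun t : ℝ => (t : ℂ) ^ k * Complex.exp (b * t ^ 2 + c * t + d) := by
  set β : ℝ := -b.re / 2 with hβ
  have hβ0 : 0 < β := by rw [hβ]; linarith
  have hre : ∀ t : ℝ, (b * (t : ℂ) ^ 2 + c * (t : ℂ) + d).re
      = b.re * t ^ 2 + c.re * t + d.re := by
    intro t
    simp [Complex.add_re, Complex.mul_re, ← Complex.ofReal_pow]
  have key : ∀ t : ℝ, b.re * t ^ 2 + c.re * t + d.re
      ≤ -β * t ^ 2 + (c.re ^ 2 / (4 * β) + d.re) := by
    intro t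
    have h4β : (0:ℝ) < 4 * β := by positivity
    have hbβ : b.re = -2 * β := by rw [hβ]; ring
    have hkey : c.re * t - β * t ^ 2 ≤ c.re ^ 2 / (4 * β) := by
      rw [le_div_iff₀ h4β]
      nlinarith [sq_nonneg (2 * β * t - c.re)]
    nlinarith [hkey, hβ0, sq_nonneg t]
  have hint : Integrable fun t : ℝ => t ^ k * Real.exp (-β * t ^ 2) := by
    have := integrable_rpow_mul_exp_neg_mul_sq hβ0 (s := (k : ℝ))
      (by linarith [Nat.cast_nonneg (α := ℝ) k])
    simpa [Real.rpow_natCast] using this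
  apply Integrable.mono' ((hint.norm).mul_const (Real.exp (c.re ^ 2 / (4 * β) + d.re)))
  · apply Continuous.aestronglyMeasurable
    continuity
  · filter_upwards with t
    rw [norm_mul, Complex.norm_exp, hre t]
    have h1 : ‖(t : ℂ) ^ k‖ = |t| ^ k := by
      rw [← Complex.ofReal_pow]
      simp
    rw [h1]
    have h2 : Real.exp (b.re * t ^ 2 + c.re * t + d.re)
        ≤ Real.exp (-β * t ^ 2) * Real.exp (c.re ^ 2 / (4 * β) + d.re) := by
      rw [← Real.exp_add]
      exact Real.exp_le_exp.2 (key t)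
    calc |t| ^ k * Real.exp (b.re * t ^ 2 + c.re * t + d.re)
        ≤ |t| ^ k * (Real.exp (-β * t ^ 2) * Real.exp (c.re ^ 2 / (4 * β) + d.re)) := by
          exact mul_le_mul_of_nonneg_left h2 (by positivity)
      _ = ‖t ^ k * Real.exp (-β * t ^ 2)‖ * Real.exp (c.re ^ 2 / (4 * β) + d.re) := by
          rw [norm_mul, Real.norm_eq_abs, Real.norm_eq_abs, abs_pow,
            abs_of_nonneg (Real.exp_pos _).le]
          ring

lemma integrable_poly_mul_cexp (p : Polynomial ℝ) {b : ℂ} (hb : b.re < 0) (c d : ℂ) :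
    Integrable fun t : ℝ => ((p.eval t : ℝ) : ℂ) * Complex.exp (b * t ^ 2 + c * t + d) := by
  induction p using Polynomial.induction_on' with
  | add p q hp hq =>
    simpa [add_mul, Pi.add_def] using hp.add hq
  | monomial k a =>
    have h := (integrable_pow_mul_cexp k hb c d).const_mul (a : ℂ)
    apply h.congr
    filter_upwards with t
    push_cast [Polynomial.eval_monomial]
    ring

lemma integrable_poly_exp (p : Polynomial ℝ) (z : ℂ) :
    Integrable fun t : ℝ =>
      ((p.eval t : ℝ) : ℂ) * Complex.exp (2 * t * z - z ^ 2 - (t : ℂ) ^ 2) := by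
  have h := integrable_poly_mul_cexp p (b := -1) (by norm_num) (2 * z) (-z ^ 2)
  apply h.congr
  filter_upwards with t
  congr 1
  ring_nf

lemma sqrt_pi_eq : ((Real.sqrt π : ℝ) : ℂ) = (π : ℂ) ^ ((1 : ℂ) / 2) := by
  rw [Real.sqrt_eq_rpow]
  rw [Complex.ofReal_cpow Real.pi_pos.le]
  norm_num

lemma key_integral (n : ℕ) (z : ℂ) :
    ∫ t : ℝ, (((pH n).eval t : ℝ) : ℂ) * Complex.exp (2 * t * z - z ^ 2 - (t : ℂ) ^ 2)
      = 2 ^ n * (Real.sqrt π : ℂ) * z ^ n := by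
  induction n with
  | zero =>
    have hfun : (fun t : ℝ => (((pH 0).eval t : ℝ) : ℂ)
          * Complex.exp (2 * t * z - z ^ 2 - (t : ℂ) ^ 2))
        = fun t : ℝ => Complex.exp ((-1) * (t : ℂ) ^ 2 + (2 * z) * t + (-z ^ 2)) := by
      funext t
      simp only [pH, Polynomial.eval_one, Complex.ofReal_one, one_mul]
      congr 1
      ring
    rw [hfun, integral_cexp_quadratic (by norm_num : ((-1 : ℂ)).re < 0) (2 * z) (-z ^ 2)]
    have h1 : -z ^ 2 - (2 * z) ^ 2 / (4 * (-1 : ℂ)) = 0 := by ring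
    rw [h1, Complex.exp_zero, mul_one, pow_zero, one_mul, pow_zero, mul_one, sqrt_pi_eq]
    norm_num
  | succ n ih =>
    set p := pH n with hp
    set q := Polynomial.derivative p with hq
    set E : ℝ → ℂ := fun t => Complex.exp (2 * t * z - z ^ 2 - (t : ℂ) ^ 2) with hE
    -- derivative of g t = p(t) * E t
    have hg : ∀ t : ℝ, HasDerivAt (fun s : ℝ => ((p.eval s : ℝ) : ℂ) * E s)
        (((q.eval t : ℝ) : ℂ) * E t
          + ((p.eval t : ℝ) : ℂ) * (E t * (2 * z - 2 * t))) t := by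
      intro t
      have h1 : HasDerivAt (fun s : ℝ => ((p.eval s : ℝ) : ℂ)) ((q.eval t : ℝ) : ℂ) t :=
        (p.hasDerivAt t).ofReal_comp
      have hid : HasDerivAt (fun s : ℝ => (s : ℂ)) 1 t := by
        simpa using (hasDerivAt_id t).ofReal_comp
      have h2 : HasDerivAt (fun s : ℝ => 2 * (s : ℂ) * z - z ^ 2 - (s : ℂ) ^ 2)
          (2 * z - 2 * t) t := by
        have ha := ((hid.const_mul (2 : ℂ)).mul_const z).sub_const (z ^ 2)
        have hsq : HasDerivAt (fun s : ℝ => (s : ℂ) ^ 2) ((t : ℂ) + t) t := by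
          have h := hid.mul hid
          simp only [one_mul, mul_one, ← pow_two] at h
          exact h
        have hb := ha.fun_sub hsq
        exact hb.congr_deriv (by ring)
      exact h1.mul h2.cexp
    have hintp := integrable_poly_exp p z
    have hintq := integrable_poly_exp q z
    have hintXp := integrable_poly_exp (Polynomial.X * p) z
    have hXp : ∀ t : ℝ, (((Polynomial.X * p).eval t : ℝ) : ℂ) = (t : ℂ) * ((p.eval t : ℝ) : ℂ) := by
      intro t; push_cast [Polynomial.eval_mul, Polynomial.eval_X]; ring
    -- the derivative function is integrable
    have i2 : Integrable (fun t : ℝ => 2 * z * (((p.eval t : ℝ) : ℂ) * E t)) :=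
      hintp.const_mul (2 * z)
    have i4 : Integrable (fun t : ℝ => 2 * ((((Polynomial.X * p).eval t : ℝ) : ℂ) * E t)) :=
      hintXp.const_mul 2
    have i3 : Integrable (fun t : ℝ => ((q.eval t : ℝ) : ℂ) * E t
        + 2 * z * (((p.eval t : ℝ) : ℂ) * E t)) := hintq.add i2
    have hG : Integrable (fun t : ℝ => ((q.eval t : ℝ) : ℂ) * E t
        + ((p.eval t : ℝ) : ℂ) * (E t * (2 * z - 2 * t))) := by
      apply (i3.sub i4).congr
      filter_upwards with t
      simp only [Pi.add_apply, Pi.sub_apply, hXp]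
      ring
    have hzero : ∫ t : ℝ, (((q.eval t : ℝ) : ℂ) * E t
        + ((p.eval t : ℝ) : ℂ) * (E t * (2 * z - 2 * t))) = 0 :=
      integral_eq_zero_of_hasDerivAt_of_integrable hg hG hintp
    have hzero2 : ∫ t : ℝ, (((q.eval t : ℝ) : ℂ) * E t
        + 2 * z * (((p.eval t : ℝ) : ℂ) * E t)
        - 2 * ((((Polynomial.X * p).eval t : ℝ) : ℂ) * E t)) = 0 := by
      rw [← hzero]
      apply integral_congr_ae
      filter_upwards with t
      simp only [hXp]
      ring
    have hA : (∫ t : ℝ, (((q.eval t : ℝ) : ℂ) * E t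
          + 2 * z * (((p.eval t : ℝ) : ℂ) * E t)
          - 2 * ((((Polynomial.X * p).eval t : ℝ) : ℂ) * E t)))
        = (∫ t : ℝ, ((q.eval t : ℝ) : ℂ) * E t)
          + 2 * z * (∫ t : ℝ, ((p.eval t : ℝ) : ℂ) * E t)
          - 2 * (∫ t : ℝ, (((Polynomial.X * p).eval t : ℝ) : ℂ) * E t) := by
      rw [integral_sub i3 i4, integral_add hintq i2, integral_const_mul, integral_const_mul]
    have hB : (∫ t : ℝ, (2 * ((((Polynomial.X * p).eval t : ℝ) : ℂ) * E t)
          - ((q.eval t : ℝ) : ℂ) * E t))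
        = 2 * (∫ t : ℝ, (((Polynomial.X * p).eval t : ℝ) : ℂ) * E t)
          - (∫ t : ℝ, ((q.eval t : ℝ) : ℂ) * E t) := by
      rw [integral_sub i4 hintq, integral_const_mul]
    have hC : (∫ t : ℝ, (((pH (n + 1)).eval t : ℝ) : ℂ) * E t)
        = ∫ t : ℝ, (2 * ((((Polynomial.X * p).eval t : ℝ) : ℂ) * E t)
          - ((q.eval t : ℝ) : ℂ) * E t) := by
      apply integral_congr_ae
      filter_upwards with t
      have hev : ((pH (n + 1)).eval t : ℝ)
          = 2 * ((Polynomial.X * p).eval t) - q.eval t := by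
        simp only [pH, ← hp, ← hq, Polynomial.eval_sub, Polynomial.eval_mul,
          Polynomial.eval_X, Polynomial.eval_ofNat]
      rw [hev]
      push_cast
      ring
    rw [hA] at hzero2
    have hfin : (∫ t : ℝ, ((q.eval t : ℝ) : ℂ) * E t)
        = 2 * (∫ t : ℝ, (((Polynomial.X * p).eval t : ℝ) : ℂ) * E t)
          - 2 * z * (∫ t : ℝ, ((p.eval t : ℝ) : ℂ) * E t) := by
      linear_combination hzero2
    rw [hC, hB, hfin]
    have hih : (∫ t : ℝ, ((p.eval t : ℝ) : ℂ) * E t)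
        = 2 ^ n * (Real.sqrt π : ℂ) * z ^ n := by
      simp only [hE]
      exact ih
    rw [hih]
    ring

/-- `∫ H_n(t) e^{2tz - z² - t²} dt = 2^n √π zⁿ`; equivalently, the Bargmann transform
`𝔅f(z) = (2^{1/4}/π^{3/2}) ∫ f(t/√(2π)) e^{2tz - z² - t²/2} dt` of
`h_n(x) = H_n(√(2π)x) e^{-πx²}` equals `(2^{n+1/4}/π) zⁿ`. -/
theorem bargmann_of_hermite (n : ℕ) (z : ℂ) :
    (∫ t : ℝ, (physHermite n t : ℂ) * Complex.exp (2 * t * z - z ^ 2 - (t : ℂ) ^ 2)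
      = 2 ^ n * (Real.sqrt π : ℂ) * z ^ n) ∧
    (((2 : ℝ) ^ ((1 : ℝ) / 4) / π ^ ((3 : ℝ) / 2) : ℝ)
        * ∫ t : ℝ, scaledHermite n (t / Real.sqrt (2 * π))
            * Complex.exp (2 * t * z - z ^ 2 - (t : ℂ) ^ 2 / 2)
      = (((2 : ℝ) ^ ((n : ℝ) + 1 / 4) / π : ℝ) : ℂ) * z ^ n) := by
  have h1 : ∫ t : ℝ, (physHermite n t : ℂ) * Complex.exp (2 * t * z - z ^ 2 - (t : ℂ) ^ 2)
      = 2 ^ n * (Real.sqrt π : ℂ) * z ^ n := by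
    rw [← key_integral n z]
    apply integral_congr_ae
    filter_upwards with t
    rw [physHermite_eq]
  refine ⟨h1, ?_⟩
  have h2π : (0 : ℝ) < 2 * π := by positivity
  have hsq : Real.sqrt (2 * π) ≠ 0 := ne_of_gt (Real.sqrt_pos.2 h2π)
  have hs : ∀ t : ℝ, scaledHermite n (t / Real.sqrt (2 * π))
      * Complex.exp (2 * t * z - z ^ 2 - (t : ℂ) ^ 2 / 2)
      = (physHermite n t : ℂ) * Complex.exp (2 * t * z - z ^ 2 - (t : ℂ) ^ 2) := by
    intro t
    unfold scaledHermite
    have harg : Real.sqrt (2 * π) * (t / Real.sqrt (2 * π)) = t := by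
      field_simp
    rw [harg, mul_assoc, ← Complex.exp_add]
    have hpi : π * (t / Real.sqrt (2 * π)) ^ 2 = t ^ 2 / 2 := by
      rw [div_pow, Real.sq_sqrt h2π.le]
      field_simp
    congr 1
    rw [hpi]
    push_cast
    ring
  have hint : (∫ t : ℝ, scaledHermite n (t / Real.sqrt (2 * π))
        * Complex.exp (2 * t * z - z ^ 2 - (t : ℂ) ^ 2 / 2))
      = ∫ t : ℝ, (physHermite n t : ℂ) * Complex.exp (2 * t * z - z ^ 2 - (t : ℂ) ^ 2) :=
    integral_congr_ae (by filter_upwards with t; exact hs t)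
  rw [hint, h1]
  have hπ : (0 : ℝ) < π := Real.pi_pos
  have hconst : ((2 : ℝ) ^ ((1 : ℝ) / 4) / π ^ ((3 : ℝ) / 2)) * (2 ^ n * Real.sqrt π)
      = (2 : ℝ) ^ ((n : ℝ) + 1 / 4) / π := by
    rw [Real.rpow_add two_pos, Real.rpow_natCast]
    rw [show (3 : ℝ) / 2 = 1 + 1 / 2 by norm_num, Real.rpow_add hπ, Real.rpow_one,
      ← Real.sqrt_eq_rpow]
    have hsπ : Real.sqrt π ≠ 0 := ne_of_gt (Real.sqrt_pos.2 hπ)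
    field_simp
  calc (((2 : ℝ) ^ ((1 : ℝ) / 4) / π ^ ((3 : ℝ) / 2) : ℝ) : ℂ)
        * (2 ^ n * (Real.sqrt π : ℂ) * z ^ n)
      = ((((2 : ℝ) ^ ((1 : ℝ) / 4) / π ^ ((3 : ℝ) / 2)) * (2 ^ n * Real.sqrt π) : ℝ) : ℂ)
          * z ^ n := by push_cast; ring
    _ = (((2 : ℝ) ^ ((n : ℝ) + 1 / 4) / π : ℝ) : ℂ) * z ^ n := by rw [hconst]
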